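/- For any operator P on a finite-dimensional Hilbert space, the trace norm equals the minimum over all unitaries U, V of the entrywise l1 norm of UPV: ‖P‖_tr = min_{U,V unitary} ‖UPV‖_{l1}, and the minimum is attained. -/

import Mathlib

open scoped BigOperators ComplexOrder Kronecker

/-- Trace norm: `‖P‖_tr = Tr √(Pᴴ P)`. -/
noncomputable def traceNorm {n : Type*} [Fintype n] [DecidableEq n] (P : Matrix n n ℂ) : ℝ :=
  (((Matrix.posSemidef_conjTranspose_mul_self P).1.eigenvectorUnitary : Matrix n n ℂ) *
    Matrix.diagonal (((↑) : ℝ → ℂ) ∘ (√·) ∘ (Matrix.posSemidef_conjTranspose_mul_self P).1.eigenvalues) *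
    (star (Matrix.posSemidef_conjTranspose_mul_self P).1.eigenvectorUnitary : Matrix n n ℂ)).trace.re

/-- Entrywise l1 norm of a matrix. -/
noncomputable def l1Norm {n : Type*} [Fintype n] (P : Matrix n n ℂ) : ℝ :=
  ∑ j, ∑ k, ‖P j k‖

section Aux

open Matrix

variable {n : Type*} [Fintype n] [DecidableEq n]

lemma conj_mul_self_re (z : ℂ) : ((starRingEnd ℂ) z * z).re = ‖z‖ ^ 2 := by
  rw [← Complex.normSq_eq_conj_mul_self, Complex.ofReal_re, Complex.normSq_eq_norm_sq]

lemma unitary_col_sq_sum {A : Matrix n n ℂ} (hA : A ∈ Matrix.unitaryGroup n ℂ) (k : n) :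
    ∑ i, ‖A i k‖ ^ 2 = 1 := by
  have h1 : Aᴴ * A = 1 := by
    rw [← Matrix.star_eq_conjTranspose]
    exact hA.1
  have h2 : (Aᴴ * A) k k = 1 := by rw [h1]; simp
  have h3 : (Aᴴ * A) k k = ∑ i, (starRingEnd ℂ) (A i k) * A i k := by
    simp [Matrix.mul_apply, Matrix.conjTranspose_apply]
  have h4 := congrArg Complex.re (h3.symm.trans h2)
  rw [Complex.re_sum, Complex.one_re] at h4
  rw [← h4]
  exact Finset.sum_congr rfl fun i _ => (conj_mul_self_re _).symm

lemma unitary_row_sq_sum {A : Matrix n n ℂ} (hA : A ∈ Matrix.unitaryGroup n ℂ) (k : n) :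
    ∑ i, ‖A k i‖ ^ 2 = 1 := by
  have : Aᴴ ∈ Matrix.unitaryGroup n ℂ := by
    simpa [Matrix.star_eq_conjTranspose] using Unitary.star_mem hA
  simpa [Matrix.conjTranspose_apply, map_pow] using unitary_col_sq_sum this k

/-- Key inequality: if `diagonal d = A * Q * C` with `A, C` unitary and `d ≥ 0`, then
`∑ d ≤ ‖Q‖_{l1}`. -/
lemma key_ineq {A Q C : Matrix n n ℂ}
    (hA : A ∈ Matrix.unitaryGroup n ℂ) (hC : C ∈ Matrix.unitaryGroup n ℂ)
    {d : n → ℝ} (hd : ∀ i, 0 ≤ d i)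
    (hD : Matrix.diagonal (fun i => (d i : ℂ)) = A * Q * C) :
    ∑ i, d i ≤ l1Norm Q := by
  have hdi : ∀ i, d i = ‖(A * Q * C) i i‖ := by
    intro i
    rw [← hD, Matrix.diagonal_apply_eq, Complex.norm_of_nonneg (hd i)]
  have step1 : ∀ i, ‖(A * Q * C) i i‖
      ≤ ∑ k, ∑ j, ‖A i k‖ * ‖Q k j‖ * ‖C j i‖ := by
    intro i
    have e1 : (A * Q * C) i i = ∑ j, (∑ k, A i k * Q k j) * C j i := by
      simp [Matrix.mul_apply]
    rw [e1]
    calc ‖∑ j, (∑ k, A i k * Q k j) * C j i‖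
        ≤ ∑ j, ‖(∑ k, A i k * Q k j) * C j i‖ := by
          exact norm_sum_le _ _
      _ ≤ ∑ j, (∑ k, ‖A i k‖ * ‖Q k j‖) * ‖C j i‖ := by
          refine Finset.sum_le_sum fun j _ => ?_
          rw [norm_mul]
          refine mul_le_mul_of_nonneg_right ?_ (norm_nonneg _)
          refine (norm_sum_le _ _).trans ?_
          exact le_of_eq (Finset.sum_congr rfl fun k _ => norm_mul _ _)
      _ = ∑ k, ∑ j, ‖A i k‖ * ‖Q k j‖ * ‖C j i‖ := by
          simp_rw [Finset.sum_mul]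
          exact Finset.sum_comm
  have cauchy : ∀ k j, ∑ i, ‖A i k‖ * ‖C j i‖ ≤ 1 := by
    intro k j
    have h2 := Finset.sum_mul_sq_le_sq_mul_sq Finset.univ
      (fun i => ‖A i k‖) (fun i => ‖C j i‖)
    rw [unitary_col_sq_sum hA k, unitary_row_sq_sum hC j, one_mul] at h2
    have h3 : (0:ℝ) ≤ ∑ i, ‖A i k‖ * ‖C j i‖ :=
      Finset.sum_nonneg fun i _ => mul_nonneg (norm_nonneg _) (norm_nonneg _)
    nlinarith
  calc ∑ i, d i
      ≤ ∑ i, ∑ k, ∑ j, ‖A i k‖ * ‖Q k j‖ * ‖C j i‖ := by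
        refine Finset.sum_le_sum fun i _ => ?_
        rw [hdi i]; exact step1 i
    _ = ∑ k, ∑ j, ‖Q k j‖ * ∑ i, ‖A i k‖ * ‖C j i‖ := by
        rw [Finset.sum_comm]
        refine Finset.sum_congr rfl fun k _ => ?_
        rw [Finset.sum_comm]
        refine Finset.sum_congr rfl fun j _ => ?_
        rw [Finset.mul_sum]
        exact Finset.sum_congr rfl fun i _ => by ring
    _ ≤ ∑ k, ∑ j, ‖Q k j‖ * 1 := by
        refine Finset.sum_le_sum fun k _ => Finset.sum_le_sum fun j _ => ?_
        exact mul_le_mul_of_nonneg_left (cauchy k j) (norm_nonneg _)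
    _ = l1Norm Q := by simp [l1Norm]

/-- Singular value decomposition tailored to our needs. -/
lemma exists_svd (P : Matrix n n ℂ) :
    ∃ W V : Matrix n n ℂ, W ∈ Matrix.unitaryGroup n ℂ ∧ V ∈ Matrix.unitaryGroup n ℂ ∧
    ∃ d : n → ℝ, (∀ i, 0 ≤ d i) ∧
      P = W * Matrix.diagonal (fun i => (d i : ℂ)) * Vᴴ ∧ traceNorm P = ∑ i, d i := by
  have hP := Matrix.posSemidef_conjTranspose_mul_self P
  have hH := hP.1
  set V : Matrix n n ℂ := (hH.eigenvectorUnitary : Matrix n n ℂ) with hVdef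
  have hV : V ∈ Matrix.unitaryGroup n ℂ := SetLike.coe_mem _
  set e : n → ℝ := hH.eigenvalues with hedef
  have he : ∀ i, 0 ≤ e i := hP.eigenvalues_nonneg
  set d : n → ℝ := fun i => Real.sqrt (e i) with hddef
  have hd : ∀ i, 0 ≤ d i := fun i => Real.sqrt_nonneg _
  have hVV : Vᴴ * V = 1 := by
    rw [← Matrix.star_eq_conjTranspose]; exact hV.1
  have hVV' : V * Vᴴ = 1 := by
    rw [← Matrix.star_eq_conjTranspose]; exact hV.2
  -- trace identity
  have htrace : traceNorm P = ∑ i, d i := by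
    have hsqrt : traceNorm P = (V * Matrix.diagonal (fun i => (d i : ℂ)) * Vᴴ).trace.re := by
      rfl
    rw [hsqrt, Matrix.trace_mul_cycle, hVV, Matrix.one_mul,
      Matrix.trace_diagonal, Complex.re_sum]
    exact Finset.sum_congr rfl fun i _ => by simp
  -- diagonalization of PᴴP
  have hdiag : Vᴴ * (Pᴴ * P) * V = Matrix.diagonal (fun i => ((e i : ℝ) : ℂ)) := by
    have := Matrix.IsHermitian.conjStarAlgAut_star_eigenvectorUnitary hH
    simp only [Unitary.conjStarAlgAut_apply, Unitary.coe_star, star_star,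
      Matrix.star_eq_conjTranspose, Matrix.conjTranspose_conjTranspose] at this
    exact this
  set B : Matrix n n ℂ := P * V with hBdef
  have hBB : Bᴴ * B = Matrix.diagonal (fun i => ((e i : ℝ) : ℂ)) := by
    rw [hBdef, Matrix.conjTranspose_mul, ← hdiag]
    noncomm_ring
  have hBBij : ∀ i j, ∑ k, (starRingEnd ℂ) (B k i) * B k j
      = Matrix.diagonal (fun i => ((e i : ℝ) : ℂ)) i j := by
    intro i j
    rw [← hBB]
    simp [Matrix.mul_apply, Matrix.conjTranspose_apply]
  -- column of B is zero when e i = 0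
  have hcolzero : ∀ i, e i = 0 → ∀ k, B k i = 0 := by
    intro i hei k
    have h0 : ∑ k, ‖B k i‖ ^ 2 = 0 := by
      have h := hBBij i i
      rw [Matrix.diagonal_apply_eq, hei, Complex.ofReal_zero] at h
      have h4 := congrArg Complex.re h
      rw [Complex.re_sum, Complex.zero_re] at h4
      rw [← h4]
      exact Finset.sum_congr rfl fun k _ => (conj_mul_self_re _).symm
    have hk : ‖B k i‖ ^ 2 = 0 := by
      have := (Finset.sum_eq_zero_iff_of_nonneg
        (fun k _ => sq_nonneg (‖B k i‖))).mp h0 k (Finset.mem_univ k)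
      exact this
    have := pow_eq_zero_iff (n := 2) (by norm_num) |>.mp hk
    exact norm_eq_zero.mp this
  -- columns as Euclidean vectors
  set g : n → EuclideanSpace ℂ n := fun i => WithLp.toLp 2 (fun k => B k i) with hgdef
  have hinner : ∀ i j, (inner ℂ (g i) (g j) : ℂ)
      = Matrix.diagonal (fun i => ((e i : ℝ) : ℂ)) i j := by
    intro i j
    rw [← hBBij i j]
    simp [PiLp.inner_apply, hgdef, RCLike.inner_apply, mul_comm]
  set u : n → EuclideanSpace ℂ n := fun i => ((d i : ℂ))⁻¹ • g i with hudef
  have hON : Orthonormal ℂ (Set.restrict {i | e i ≠ 0} u) := by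
    rw [orthonormal_iff_ite]
    rintro ⟨i, hi⟩ ⟨j, hj⟩
    simp only [Set.restrict, Set.domRestrict_apply, hudef]
    rw [inner_smul_left, inner_smul_right, hinner i j]
    rcases eq_or_ne i j with rfl | hij
    · simp only [Matrix.diagonal_apply_eq, Subtype.mk.injEq, if_pos rfl]
      have hdi : (0:ℝ) < d i := Real.sqrt_pos.mpr (lt_of_le_of_ne (he i) (Ne.symm hi))
      have hd2 : (d i : ℝ) * d i = e i := Real.mul_self_sqrt (he i)
      rw [map_inv₀, Complex.conj_ofReal]
      rw [← Complex.ofReal_inv]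
      push_cast [← hd2]
      field_simp
    · have : ¬ (⟨i, hi⟩ : {i | e i ≠ 0}) = ⟨j, hj⟩ := by simpa using hij
      rw [if_neg this, Matrix.diagonal_apply_ne _ hij]
      simp
  obtain ⟨b, hb⟩ := hON.exists_orthonormalBasis_extension_of_card_eq
    (finrank_euclideanSpace (𝕜 := ℂ) (ι := n))
  have hW : Matrix.of (fun k i => (b i k : ℂ)) ∈ Matrix.unitaryGroup n ℂ := by
    rw [Matrix.mem_unitaryGroup_iff']
    ext i j
    have hbij := orthonormal_iff_ite.mp b.orthonormal i j
    rw [Matrix.star_eq_conjTranspose]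
    simp only [Matrix.mul_apply, Matrix.conjTranspose_apply, Matrix.of_apply,
      Matrix.one_apply]
    rw [← hbij]
    simp [PiLp.inner_apply, RCLike.inner_apply, mul_comm]
  have hWD : Matrix.of (fun k i => (b i k : ℂ)) * Matrix.diagonal (fun i => (d i : ℂ)) = B := by
    ext k i
    rw [Matrix.mul_diagonal]
    simp only [Matrix.of_apply]
    rcases eq_or_ne (e i) 0 with hei | hei
    · rw [hcolzero i hei k]
      have : d i = 0 := by rw [hddef]; simp [hei]
      rw [this]
      simp
    · have hbi : b i = u i := hb i hei
      have hdi : (0:ℝ) < d i := Real.sqrt_pos.mpr (lt_of_le_of_ne (he i) (Ne.symm hei))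
      rw [hbi]
      have : u i k = ((d i : ℂ))⁻¹ * B k i := rfl
      rw [this]
      have hdne : ((d i : ℝ) : ℂ) ≠ 0 := by
        simpa using ne_of_gt hdi
      field_simp
  refine ⟨_, V, hW, hV, d, hd, ?_, htrace⟩
  rw [hWD, hBdef, Matrix.mul_assoc, hVV', Matrix.mul_one]

end Aux

open scoped Matrix

/-- the trace norm is the minimum, over unitaries U, V, of ‖U P V‖_{l1},
and the minimum is attained. -/
theorem traceNorm_eq_min_l1 {n : Type*} [Fintype n] [DecidableEq n] (P : Matrix n n ℂ) :
    IsLeast {x : ℝ | ∃ U V : Matrix n n ℂ, U ∈ Matrix.unitaryGroup n ℂ ∧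
      V ∈ Matrix.unitaryGroup n ℂ ∧ x = l1Norm (U * P * V)} (traceNorm P) := by
  obtain ⟨W, V, hW, hV, d, hd, hPeq, htr⟩ := exists_svd P
  have hWW : Wᴴ * W = 1 := by rw [← Matrix.star_eq_conjTranspose]; exact hW.1
  have hVV : Vᴴ * V = 1 := by rw [← Matrix.star_eq_conjTranspose]; exact hV.1
  constructor
  · -- membership: take U = Wᴴ, V = V
    refine ⟨Wᴴ, V, ?_, hV, ?_⟩
    · rw [← Matrix.star_eq_conjTranspose]; exact Unitary.star_mem hW
    · have hDeq : Wᴴ * P * V = Matrix.diagonal (fun i => (d i : ℂ)) := by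
        rw [hPeq]
        calc Wᴴ * (W * Matrix.diagonal (fun i => (d i : ℂ)) * Vᴴ) * V
            = (Wᴴ * W) * Matrix.diagonal (fun i => (d i : ℂ)) * (Vᴴ * V) := by
              noncomm_ring
          _ = Matrix.diagonal (fun i => (d i : ℂ)) := by rw [hWW, hVV]; noncomm_ring
      rw [hDeq, htr, l1Norm]
      rw [Finset.sum_congr rfl fun j _ => Finset.sum_congr rfl fun k _ => rfl]
      have : ∀ j, ∑ k, ‖Matrix.diagonal (fun i => (d i : ℂ)) j k‖ = d j := by
        intro j
        rw [Finset.sum_eq_single j]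
        · rw [Matrix.diagonal_apply_eq, Complex.norm_of_nonneg (hd j)]
        · intro k _ hk
          rw [Matrix.diagonal_apply_ne _ (Ne.symm hk)]
          simp
        · intro h; exact absurd (Finset.mem_univ j) h
      rw [Finset.sum_congr rfl fun j _ => this j]
  · -- lower bound
    rintro x ⟨U, V', hU, hV', rfl⟩
    have hUU : star U * U = 1 := hU.1
    have hV'V' : V' * star V' = 1 := hV'.2
    have hD : Matrix.diagonal (fun i => (d i : ℂ))
        = (Wᴴ * star U) * (U * P * V') * (star V' * V) := by
      have h1 : (Wᴴ * star U) * (U * P * V') * (star V' * V)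
          = Wᴴ * ((star U * U) * P * (V' * star V')) * V := by noncomm_ring
      rw [h1, hUU, hV'V', Matrix.one_mul, Matrix.mul_one, hPeq]
      symm
      calc Wᴴ * (W * Matrix.diagonal (fun i => (d i : ℂ)) * Vᴴ) * V
          = (Wᴴ * W) * Matrix.diagonal (fun i => (d i : ℂ)) * (Vᴴ * V) := by noncomm_ring
        _ = Matrix.diagonal (fun i => (d i : ℂ)) := by rw [hWW, hVV]; noncomm_ring
    have hA : Wᴴ * star U ∈ Matrix.unitaryGroup n ℂ := by
      have h1 : Wᴴ ∈ Matrix.unitaryGroup n ℂ := by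
        rw [← Matrix.star_eq_conjTranspose]; exact Unitary.star_mem hW
      exact mul_mem h1 (Unitary.star_mem hU)
    have hC : star V' * V ∈ Matrix.unitaryGroup n ℂ := mul_mem (Unitary.star_mem hV') hV
    rw [htr]
    exact key_ineq hA hC hd hD
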